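/- Let H be an inner product space, a ∈ H a unit vector, x_1,…,x_n ∈ H and r_1,…,r_n > 0 with ‖x_i − a‖ ≤ r_i for each i. Then 0 ≤ ∑_{i=1}^n ‖x_i‖ − ‖∑_{i=1}^n x_i‖ ≤ (1/2) ∑_{i=1}^n r_i². -/

import Mathlib

theorem stmt_3 {𝕜 H : Type*} [RCLike 𝕜] [NormedAddCommGroup H] [InnerProductSpace 𝕜 H]
    (n : ℕ) (a : H) (ha : ‖a‖ = 1) (x : ℕ → H) (r : ℕ → ℝ)
    (hr : ∀ i ∈ Finset.Icc 1 n, 0 < r i)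
    (h : ∀ i ∈ Finset.Icc 1 n, ‖x i - a‖ ≤ r i) :
    0 ≤ (∑ i ∈ Finset.Icc 1 n, ‖x i‖) - ‖∑ i ∈ Finset.Icc 1 n, x i‖ ∧
      (∑ i ∈ Finset.Icc 1 n, ‖x i‖) - ‖∑ i ∈ Finset.Icc 1 n, x i‖ ≤
        (1 / 2) * ∑ i ∈ Finset.Icc 1 n, (r i) ^ 2 := by
  constructor
  · linarith [norm_sum_le (Finset.Icc 1 n) x]
  · have key : ∀ i ∈ Finset.Icc 1 n,
        ‖x i‖ - RCLike.re (inner 𝕜 a (x i) : 𝕜) ≤ r i ^ 2 / 2 := by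
      intro i hi
      have h1 : ‖x i - a‖ ^ 2 ≤ r i ^ 2 := by
        have := h i hi
        nlinarith [norm_nonneg (x i - a), (hr i hi).le]
      have h2 : ‖x i - a‖ ^ 2 = ‖x i‖ ^ 2 - 2 * RCLike.re (inner 𝕜 (x i) a : 𝕜) + ‖a‖ ^ 2 :=
        norm_sub_sq (𝕜 := 𝕜) (x i) a
      have h3 : RCLike.re (inner 𝕜 (x i) a : 𝕜) = RCLike.re (inner 𝕜 a (x i) : 𝕜) := by
        rw [← inner_conj_symm (x i) a, RCLike.conj_re]
      rw [h3, ha] at h2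
      nlinarith [norm_nonneg (x i), sq_nonneg (‖x i‖ - 1)]
    have hlow : RCLike.re (inner 𝕜 a (∑ i ∈ Finset.Icc 1 n, x i) : 𝕜) ≤
        ‖∑ i ∈ Finset.Icc 1 n, x i‖ := by
      have := re_inner_le_norm (𝕜 := 𝕜) a (∑ i ∈ Finset.Icc 1 n, x i)
      rwa [ha, one_mul] at this
    have hsum : RCLike.re (inner 𝕜 a (∑ i ∈ Finset.Icc 1 n, x i) : 𝕜) =
        ∑ i ∈ Finset.Icc 1 n, RCLike.re (inner 𝕜 a (x i) : 𝕜) := by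
      rw [inner_sum, map_sum]
    have hle : ∑ i ∈ Finset.Icc 1 n, (‖x i‖ - RCLike.re (inner 𝕜 a (x i) : 𝕜)) ≤
        ∑ i ∈ Finset.Icc 1 n, r i ^ 2 / 2 := Finset.sum_le_sum key
    rw [Finset.sum_sub_distrib] at hle
    rw [← Finset.sum_div] at hle
    linarith
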